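/- Let Y be a strong Choquet topological space and let X ⊆ Y be a Gδ-dense subset of Y. Then X, with the subspace topology, is a strong Choquet space. -/
import Mathlib


open Set

variable {X : Type*}

/-- Positions in the strong Choquet game on `X` consistent with the strategy `σ` of player `N`:
a position is the list of player `E`'s moves so far (an open set together with a chosen point
of it), most recent first; each move of `E` after the first must moreover be contained in `N`'s
answer `σ l` to the previous position `l`. -/
inductive StrongChoquetPos [TopologicalSpace X] (σ : List (Set X × X) → Set X) :
    List (Set X × X) → Prop
  | single (U : Set X) (x : X) : IsOpen U → x ∈ U → StrongChoquetPos σ [(U, x)]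
  | cons (U : Set X) (x : X) (l : List (Set X × X)) : StrongChoquetPos σ l → IsOpen U →
      x ∈ U → U ⊆ σ l → StrongChoquetPos σ ((U, x) :: l)

/-- The list of the first `n+1` moves of player `E` in a run `e` of the strong Choquet game,
most recent first. -/
def strongChoquetHist (e : ℕ → Set X × X) : ℕ → List (Set X × X)
  | 0 => [e 0]
  | n + 1 => e (n + 1) :: strongChoquetHist e n

/-- `σ` is a winning strategy for player `N` in the strong Choquet game on `X`: at every
position reachable against `σ`, the answer `σ l` is a legal move (an open set `U'` with
`x ∈ U' ⊆ U` where `(U, x)` is `E`'s last move), and for every infinite run in which `E`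
plays legally and `N` follows `σ`, the intersection of all moves played is nonempty. -/
def IsWinningStrongChoquetStrategy [TopologicalSpace X] (σ : List (Set X × X) → Set X) : Prop :=
  (∀ l, StrongChoquetPos σ l → IsOpen (σ l) ∧ ∀ p ∈ l.head?, p.2 ∈ σ l ∧ σ l ⊆ p.1) ∧
  (∀ e : ℕ → Set X × X, (∀ n, StrongChoquetPos σ (strongChoquetHist e n)) →
    (⋂ n, (e n).1).Nonempty)

/-- A topological space is strong Choquet if player `N` has a winning strategy in the strong
Choquet game. -/
def IsStrongChoquet (X : Type*) [TopologicalSpace X] : Prop :=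
  ∃ σ : List (Set X × X) → Set X, IsWinningStrongChoquetStrategy σ

/-- A subset `A` of a topological space is `Gδ`-dense if it has nonempty intersection with
every nonempty `Gδ`-subset. -/
def IsGδDense {Y : Type*} [TopologicalSpace Y] (A : Set Y) : Prop :=
  ∀ G : Set Y, IsGδ G → G.Nonempty → (A ∩ G).Nonempty

section Aux

variable {Y : Type*} [TopologicalSpace Y]

/-- Canonical open extension of a subspace-open set. -/
def extOpen (X : Set Y) (V : Set ↥X) : Set Y :=
  ⋃₀ {O : Set Y | IsOpen O ∧ ∀ z : ↥X, (z : Y) ∈ O → z ∈ V}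

lemma extOpen_isOpen (X : Set Y) (V : Set ↥X) : IsOpen (extOpen X V) :=
  isOpen_sUnion fun _ h => h.1

lemma mem_extOpen {X : Set Y} {V : Set ↥X} (hV : IsOpen V) {x : ↥X} (hx : x ∈ V) :
    (x : Y) ∈ extOpen X V := by
  obtain ⟨O, hO, hOV⟩ := isOpen_induced_iff.mp hV
  exact ⟨O, ⟨hO, fun z hz => hOV ▸ hz⟩, by rw [← hOV] at hx; exact hx⟩

lemma extOpen_spec {X : Set Y} {V : Set ↥X} {z : ↥X} (hz : (z : Y) ∈ extOpen X V) : z ∈ V := by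
  obtain ⟨O, ⟨_, hO⟩, hzO⟩ := hz
  exact hO z hzO

/-- Translation of a position in the game on the subspace `X` to a position in the game
on `Y`. -/
def trList (σ : List (Set Y × Y) → Set Y) (X : Set Y) :
    List (Set ↥X × ↥X) → List (Set Y × Y)
  | [] => []
  | [p] => [(extOpen X p.1, (p.2 : Y))]
  | p :: q :: l =>
      (extOpen X p.1 ∩ σ (trList σ X (q :: l)), (p.2 : Y)) :: trList σ X (q :: l)

lemma trList_head (σ : List (Set Y × Y) → Set Y) (X : Set Y) (p : Set ↥X × ↥X)
    (l : List (Set ↥X × ↥X)) :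
    ∃ W, (trList σ X (p :: l)).head? = some (W, (p.2 : Y)) ∧ W ⊆ extOpen X p.1 := by
  cases l with
  | nil => exact ⟨extOpen X p.1, rfl, subset_rfl⟩
  | cons q l => exact ⟨_, rfl, inter_subset_left⟩

lemma trList_pos (σ : List (Set Y × Y) → Set Y) (X : Set Y)
    (hσ1 : ∀ l, StrongChoquetPos σ l → IsOpen (σ l) ∧ ∀ p ∈ l.head?, p.2 ∈ σ l ∧ σ l ⊆ p.1)
    {l : List (Set ↥X × ↥X)}
    (h : StrongChoquetPos (fun l => Subtype.val ⁻¹' σ (trList σ X l)) l) :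
    StrongChoquetPos σ (trList σ X l) := by
  induction h with
  | single U x hU hx => exact .single _ _ (extOpen_isOpen X U) (mem_extOpen hU hx)
  | cons U x l hl hU hx hsub ih =>
    cases l with
    | nil => cases hl
    | cons q l' =>
      exact .cons _ _ _ ih ((extOpen_isOpen X U).inter (hσ1 _ ih).1)
        ⟨mem_extOpen hU hx, hsub hx⟩ inter_subset_right

end Aux

/-- Let `Y` be a strong Choquet topological space and let `X ⊆ Y` be a
`Gδ`-dense subset of `Y`.  Then `X`, with the subspace topology, is strong Choquet. -/
theorem statement_10 {Y : Type*} [TopologicalSpace Y] (hY : IsStrongChoquet Y)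
    (X : Set Y) (hX : IsGδDense X) : IsStrongChoquet ↥X := by
  obtain ⟨σ, hσ1, hσ2⟩ := hY
  refine ⟨fun l => Subtype.val ⁻¹' σ (trList σ X l), ?_, ?_⟩
  · intro l hl
    have hp := trList_pos σ X hσ1 hl
    have h1 := hσ1 _ hp
    refine ⟨h1.1.preimage continuous_subtype_val, ?_⟩
    rintro ⟨U, x⟩ hp'
    cases l with
    | nil => simp at hp'
    | cons r l' =>
      simp only [List.head?_cons, Option.mem_def, Option.some.injEq] at hp'
      subst hp'
      obtain ⟨W, hW, hWsub⟩ := trList_head σ X (U, x) l'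
      have h2 := h1.2 (W, (x : Y)) hW
      exact ⟨h2.1, fun z hz => extOpen_spec (hWsub (h2.2 hz))⟩
  · intro e he
    set e' : ℕ → Set Y × Y := fun n =>
      match n with
      | 0 => (extOpen X (e 0).1, ((e 0).2 : Y))
      | n + 1 => (extOpen X (e (n + 1)).1 ∩ σ (trList σ X (strongChoquetHist e n)),
          ((e (n + 1)).2 : Y)) with he'def
    have histeq : ∀ n, strongChoquetHist e' n = trList σ X (strongChoquetHist e n) := by
      intro n
      induction n with
      | zero => rfl
      | succ n ih =>
        cases n with
        | zero =>
          show e' 1 :: strongChoquetHist e' 0 = trList σ X (e 1 :: [e 0])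
          rw [ih]
          rfl
        | succ m =>
          show e' (m + 2) :: strongChoquetHist e' (m + 1)
              = trList σ X (e (m + 2) :: (e (m + 1) :: strongChoquetHist e m))
          rw [ih]
          rfl
    have he'pos : ∀ n, StrongChoquetPos σ (strongChoquetHist e' n) := fun n => by
      rw [histeq n]; exact trList_pos σ X hσ1 (he n)
    have hopen : ∀ n, IsOpen (e' n).1 := by
      intro n
      cases n with
      | zero => exact extOpen_isOpen X _
      | succ m =>
        refine (extOpen_isOpen X _).inter ?_
        exact (hσ1 _ (trList_pos σ X hσ1 (he m))).1
    have hGδ : IsGδ (⋂ n, (e' n).1) := .iInter_of_isOpen hopen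
    obtain ⟨y0, hy0⟩ := hσ2 e' he'pos
    obtain ⟨y, hyX, hyG⟩ := hX _ hGδ ⟨y0, hy0⟩
    refine ⟨⟨y, hyX⟩, mem_iInter.2 fun n => ?_⟩
    have hyE : y ∈ (e' n).1 := mem_iInter.1 hyG n
    cases n with
    | zero => exact extOpen_spec hyE
    | succ m => exact extOpen_spec hyE.1
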